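/- For every positive integer n, the n×n Hankel determinant det(C_{i+j} + C_{i+j+1})_{i,j=0}^{n−1} equals F_{2n+1}. -/

import Mathlib

open Finset Matrix

/-- Ballot-type numbers: `bb n k = C(2n, n+k) - C(2n, n+k+1)`. -/
def bb (n k : ℕ) : ℤ := (Nat.choose (2*n) (n+k) : ℤ) - (Nat.choose (2*n) (n+k+1) : ℤ)

lemma bb_eq_zero {n k : ℕ} (h : n < k) : bb n k = 0 := by
  unfold bb
  rw [Nat.choose_eq_zero_of_lt (by omega), Nat.choose_eq_zero_of_lt (by omega)]
  simp

lemma bb_diag (n : ℕ) : bb n n = 1 := by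
  unfold bb
  have h1 : n + n = 2*n := by omega
  rw [h1, Nat.choose_self, Nat.choose_eq_zero_of_lt (by omega)]
  simp

lemma bb_rec0 (n : ℕ) : bb (n+1) 0 = bb n 0 + bb n 1 := by
  unfold bb
  have e1 : 2*(n+1) = (2*n+1)+1 := by omega
  have h1 : Nat.choose ((2*n+1)+1) (n+1) = Nat.choose (2*n+1) n + Nat.choose (2*n+1) (n+1) :=
    Nat.choose_succ_succ _ _
  have h2 : Nat.choose (2*n+1) n = Nat.choose (2*n+1) (n+1) := by
    rw [← Nat.choose_symm (show n+1 ≤ 2*n+1 by omega)]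
    congr 1
    omega
  have h3 : Nat.choose (2*n+1) (n+1) = Nat.choose (2*n) n + Nat.choose (2*n) (n+1) :=
    Nat.choose_succ_succ _ _
  have h4 : Nat.choose ((2*n+1)+1) (n+2) = Nat.choose (2*n+1) (n+1) + Nat.choose (2*n+1) (n+2) :=
    Nat.choose_succ_succ _ _
  have h5 : Nat.choose (2*n+1) (n+2) = Nat.choose (2*n) (n+1) + Nat.choose (2*n) (n+2) :=
    Nat.choose_succ_succ _ _
  rw [e1]
  ring_nf at h1 h2 h3 h4 h5 ⊢
  omega

lemma bb_recS (n k : ℕ) : bb (n+1) (k+1) = bb n k + 2 * bb n (k+1) + bb n (k+2) := by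
  unfold bb
  have e1 : 2*(n+1) = (2*n+1)+1 := by omega
  have pas : ∀ m : ℕ, Nat.choose ((2*n+1)+1) (m+2)
      = Nat.choose (2*n) m + 2 * Nat.choose (2*n) (m+1) + Nat.choose (2*n) (m+2) := by
    intro m
    have h1 : Nat.choose ((2*n+1)+1) (m+2)
        = Nat.choose (2*n+1) (m+1) + Nat.choose (2*n+1) (m+2) := Nat.choose_succ_succ _ _
    have h2 : Nat.choose (2*n+1) (m+1) = Nat.choose (2*n) m + Nat.choose (2*n) (m+1) :=
      Nat.choose_succ_succ _ _
    have h3 : Nat.choose (2*n+1) (m+2) = Nat.choose (2*n) (m+1) + Nat.choose (2*n) (m+2) :=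
      Nat.choose_succ_succ _ _
    omega
  have p1 := pas (n+k)
  have p2 := pas (n+k+1)
  rw [e1]
  ring_nf at p1 p2 ⊢
  omega

lemma bb_zero_left (n : ℕ) : bb n 0 = (catalan n : ℤ) := by
  have key : Nat.choose (2*n) (n+1) * (n+1) = Nat.choose (2*n) n * n := by
    have h := Nat.choose_succ_right_eq (2*n) n
    have e : 2*n - n = n := by omega
    rwa [e] at h
  have hcat : ((n:ℤ) + 1) * (catalan n) = (Nat.choose (2*n) n : ℤ) := by
    have h := succ_mul_catalan_eq_centralBinom n
    have e : Nat.centralBinom n = Nat.choose (2*n) n := rfl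
    rw [e] at h
    exact_mod_cast h
  have key' : (Nat.choose (2*n) (n+1) : ℤ) * ((n:ℤ)+1) = (Nat.choose (2*n) n : ℤ) * n := by
    exact_mod_cast key
  apply mul_left_cancel₀ (a := (n:ℤ)+1) (by positivity)
  unfold bb
  have e : n + 0 = n := by omega
  have e2 : n + 0 + 1 = n + 1 := by omega
  rw [e, e2]
  nlinarith [key', hcat]

/-- The swap lemma: moving the Jacobi operator across the bilinear form. -/
lemma bb_swap (i j : ℕ) :
    ∑ k ∈ range (i+j+2), bb (i+1) k * bb j k
      = ∑ k ∈ range (i+j+2), bb i k * bb (j+1) k := by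
  rw [← sub_eq_zero, ← Finset.sum_sub_distrib]
  set H : ℕ → ℤ := fun k => match k with
    | 0 => 0
    | (m+1) => bb i m * bb j (m+1) - bb i (m+1) * bb j m with hH
  have hterm : ∀ k, bb (i+1) k * bb j k - bb i k * bb (j+1) k = H k - H (k+1) := by
    intro k
    match k with
    | 0 =>
      simp only [hH, bb_rec0]
      ring
    | (m+1) =>
      simp only [hH, bb_recS]
      ring
  calc ∑ k ∈ range (i+j+2), (bb (i+1) k * bb j k - bb i k * bb (j+1) k)
      = ∑ k ∈ range (i+j+2), (H k - H (k+1)) :=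
        Finset.sum_congr rfl fun k _ => hterm k
    _ = H 0 - H (i+j+2) := Finset.sum_range_sub' H (i+j+2)
    _ = 0 := by
        simp only [hH]
        rw [bb_eq_zero (show i < i+j+1 by omega), bb_eq_zero (show j < i+j+1 by omega)]
        ring

lemma bb_orth_core (i : ℕ) : ∀ j : ℕ,
    ∑ k ∈ range (i+j+1), bb i k * bb j k = (catalan (i+j) : ℤ) := by
  induction i with
  | zero =>
    intro j
    rw [Finset.sum_eq_single 0]
    · simp only [Nat.zero_add]
      rw [show bb 0 0 = 1 from bb_diag 0, bb_zero_left]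
      ring
    · intro k _ hk
      rw [bb_eq_zero (show 0 < k by omega)]
      ring
    · simp
  | succ i ih =>
    intro j
    have e : i + 1 + j + 1 = i + j + 2 := by omega
    rw [e, bb_swap i j]
    have e2 : i + (j+1) + 1 = i + j + 2 := by omega
    have h := ih (j+1)
    rw [e2] at h
    have e3 : i + (j+1) = i + 1 + j := by omega
    rw [e3] at h
    exact h

lemma bb_sum_trunc (i j M : ℕ) (h : i < M) :
    ∑ k ∈ range M, bb i k * bb j k = ∑ k ∈ range (i+1), bb i k * bb j k := by
  symm
  apply Finset.sum_subset
  · exact Finset.range_subset_range.mpr (by omega)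
  · intro k _ hk
    simp only [Finset.mem_range, not_lt] at hk
    rw [bb_eq_zero (show i < k by omega)]
    ring

lemma bb_orth (m i j : ℕ) (h : i < m) :
    ∑ k ∈ range m, bb i k * bb j k = (catalan (i+j) : ℤ) := by
  rw [bb_sum_trunc i j m h, ← bb_sum_trunc i j (i+j+1) (by omega), bb_orth_core i j]

/- ### Fibonacci facts -/

lemma fib_ne_zero_q (k : ℕ) : (Nat.fib (2*k+1) : ℚ) ≠ 0 := by
  have := Nat.fib_pos.mpr (show 0 < 2*k+1 by omega)
  positivity

lemma fib_three_term (t : ℕ) :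
    (Nat.fib (2*t+5) : ℚ) + Nat.fib (2*t+1) = 3 * Nat.fib (2*t+3) := by
  have h1 : Nat.fib (2*t+5) = Nat.fib (2*t+3) + Nat.fib (2*t+4) := by
    have := Nat.fib_add_two (n := 2*t+3)
    rwa [show 2*t+3+2 = 2*t+5 by omega, show 2*t+3+1 = 2*t+4 by omega] at this
  have h2 : Nat.fib (2*t+4) = Nat.fib (2*t+2) + Nat.fib (2*t+3) := by
    have := Nat.fib_add_two (n := 2*t+2)
    rwa [show 2*t+2+2 = 2*t+4 by omega, show 2*t+2+1 = 2*t+3 by omega] at this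
  have h3 : Nat.fib (2*t+3) = Nat.fib (2*t+1) + Nat.fib (2*t+2) := by
    have := Nat.fib_add_two (n := 2*t+1)
    rwa [show 2*t+1+2 = 2*t+3 by omega, show 2*t+1+1 = 2*t+2 by omega] at this
  have h : Nat.fib (2*t+5) + Nat.fib (2*t+1) = 3 * Nat.fib (2*t+3) := by omega
  exact_mod_cast h

/- ### Matrices -/

/-- The ballot matrix over `ℚ`. -/
def Bq (n : ℕ) : Matrix (Fin n) (Fin n) ℚ := Matrix.of fun i k => (bb i k : ℚ)

/-- `I + J` where `J` is the Jacobi matrix of the Catalan numbers. -/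
def Mq (n : ℕ) : Matrix (Fin n) (Fin n) ℚ := Matrix.of fun i j =>
  if (i:ℕ) = j then (if (i:ℕ) = 0 then 2 else 3)
  else if (i:ℕ)+1 = j ∨ (j:ℕ)+1 = i then 1 else 0

def Lq (n : ℕ) : Matrix (Fin n) (Fin n) ℚ := Matrix.of fun i j =>
  if (i:ℕ) = j then 1
  else if (j:ℕ)+1 = i then (Nat.fib (2*(j:ℕ)+1) : ℚ) / (Nat.fib (2*(j:ℕ)+3)) else 0

def Uq (n : ℕ) : Matrix (Fin n) (Fin n) ℚ := Matrix.of fun i j =>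
  if (i:ℕ) = j then (Nat.fib (2*(i:ℕ)+3) : ℚ) / (Nat.fib (2*(i:ℕ)+1))
  else if (i:ℕ)+1 = j then 1 else 0

lemma det_Bq (n : ℕ) : (Bq n).det = 1 := by
  rw [Matrix.det_of_lowerTriangular]
  · apply Finset.prod_eq_one
    intro i _
    simp [Bq, bb_diag]
  · intro i j hij
    simp only [OrderDual.toDual_lt_toDual] at hij
    simp only [Bq, Matrix.of_apply]
    rw [bb_eq_zero (show (i:ℕ) < j from hij)]
    simp

lemma det_Lq (n : ℕ) : (Lq n).det = 1 := by
  rw [Matrix.det_of_lowerTriangular]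
  · apply Finset.prod_eq_one
    intro i _
    simp [Lq]
  · intro i j hij
    simp only [OrderDual.toDual_lt_toDual] at hij
    have h1 : ¬ ((i:ℕ) = (j:ℕ)) := by omega
    have h2 : ¬ ((j:ℕ)+1 = (i:ℕ)) := by omega
    simp [Lq, h1, h2]

lemma fib_prod (n : ℕ) :
    ∏ i ∈ range n, (Nat.fib (2*i+3) : ℚ) / (Nat.fib (2*i+1)) = (Nat.fib (2*n+1) : ℚ) := by
  induction n with
  | zero => simp
  | succ m ih =>
    rw [Finset.prod_range_succ, ih]
    have e : 2*(m+1)+1 = 2*m+3 := by omega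
    rw [e, mul_comm, div_mul_cancel₀ _ (fib_ne_zero_q m)]

lemma det_Uq (n : ℕ) : (Uq n).det = (Nat.fib (2*n+1) : ℚ) := by
  rw [Matrix.det_of_upperTriangular]
  · have hdiag : ∀ i : Fin n, Uq n i i = (Nat.fib (2*(i:ℕ)+3) : ℚ) / (Nat.fib (2*(i:ℕ)+1)) := by
      intro i; simp [Uq]
    rw [Finset.prod_congr rfl (fun i _ => hdiag i),
      Fin.prod_univ_eq_prod_range (fun i => (Nat.fib (2*i+3) : ℚ) / (Nat.fib (2*i+1)))]
    exact fib_prod n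
  · intro i j hij
    have hij' : (j:ℕ) < (i:ℕ) := hij
    have h1 : ¬ ((i:ℕ) = (j:ℕ)) := by omega
    have h2 : ¬ ((i:ℕ)+1 = (j:ℕ)) := by omega
    simp [Uq, h1, h2]

lemma Mq_eq_LU (n : ℕ) : Mq n = Lq n * Uq n := by
  ext i j
  rw [Matrix.mul_apply]
  have hsplit : ∀ m : Fin n, Lq n i m * Uq n m j =
      (if m = i then Uq n m j else 0)
      + (if (m:ℕ)+1 = (i:ℕ) then ((Nat.fib (2*(m:ℕ)+1) : ℚ) / (Nat.fib (2*(m:ℕ)+3))) * Uq n m j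
         else 0) := by
    intro m
    by_cases h1 : m = i
    · have h2 : ¬ ((m:ℕ)+1 = (i:ℕ)) := by subst h1; omega
      have h3 : (i:ℕ) = (m:ℕ) := by rw [h1]
      simp [Lq, h1, h2, h3]
    · by_cases h2 : (m:ℕ)+1 = (i:ℕ)
      · have h3 : ¬ ((i:ℕ) = (m:ℕ)) := by omega
        simp [Lq, h1, h2, h3]
      · have h3 : ¬ ((i:ℕ) = (m:ℕ)) := by
          intro h; exact h1 (Fin.ext h.symm)
        simp [Lq, h1, h2, h3]
  rw [Finset.sum_congr rfl (fun m _ => hsplit m), Finset.sum_add_distrib,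
    Finset.sum_ite_eq' Finset.univ i (fun m => Uq n m j)]
  simp only [Finset.mem_univ, if_true]
  by_cases hi0 : (i:ℕ) = 0
  · have hz : ∀ m : Fin n, (if (m:ℕ)+1 = (i:ℕ)
        then ((Nat.fib (2*(m:ℕ)+1) : ℚ) / (Nat.fib (2*(m:ℕ)+3))) * Uq n m j else 0) = 0 :=
      fun m => if_neg (by omega)
    rw [Finset.sum_eq_zero (fun m _ => hz m), add_zero]
    by_cases hij : (i:ℕ) = (j:ℕ)
    · simp only [Mq, Uq, Matrix.of_apply, if_pos hij, if_pos hi0]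
      have hj0 : 2*(i:ℕ)+3 = 3 := by omega
      have hj1 : 2*(i:ℕ)+1 = 1 := by omega
      rw [hj0, hj1]
      norm_num
    · simp only [Mq, Uq, Matrix.of_apply, if_neg hij]
      have hno : ¬ ((j:ℕ)+1 = (i:ℕ)) := by omega
      by_cases hsd : (i:ℕ)+1 = (j:ℕ)
      · simp [hsd, hno]
      · simp [hsd, hno]
  · -- i ≥ 1; second sum has exactly one nonzero term, at t = i-1
    obtain ⟨s, hs⟩ : ∃ s, (i:ℕ) = s + 1 := ⟨(i:ℕ)-1, by omega⟩
    have hslt : s < n := by have := i.isLt; omega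
    rw [Finset.sum_eq_single_of_mem (⟨s, hslt⟩ : Fin n) (Finset.mem_univ _)
      (fun m _ hm => if_neg (fun hc => hm (Fin.ext (show (m:ℕ) = s by omega))))]
    rw [if_pos (show ((⟨s, hslt⟩ : Fin n):ℕ)+1 = (i:ℕ) by exact hs.symm)]
    simp only [Mq, Uq, Matrix.of_apply, Fin.val_mk]
    rw [hs]
    have hfs1 := fib_ne_zero_q s
    have hfs2 : (Nat.fib (2*s+3) : ℚ) ≠ 0 := by
      have := fib_ne_zero_q (s+1)
      rwa [show 2*(s+1)+1 = 2*s+3 by omega] at this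
    by_cases hj1 : s + 1 = (j:ℕ)
    · -- diagonal entry
      rw [if_pos hj1, if_pos hj1, if_neg (show ¬ s + 1 = 0 by omega),
        if_neg (show ¬ s = (j:ℕ) by omega), if_pos hj1, mul_one,
        show 2*(s+1)+3 = 2*s+5 by omega, show 2*(s+1)+1 = 2*s+3 by omega]
      have h3 := fib_three_term s
      field_simp
      linarith
    · by_cases hj2 : s + 1 + 1 = (j:ℕ)
      · -- superdiagonal entry
        rw [if_neg hj1, if_neg hj1,
          if_pos (show s+1+1 = (j:ℕ) ∨ (j:ℕ)+1 = s+1 from Or.inl hj2), if_pos hj2,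
          if_neg (show ¬ s = (j:ℕ) by omega), if_neg (show ¬ s + 1 = (j:ℕ) by omega)]
        ring
      · by_cases hj3 : (j:ℕ) + 1 = s + 1
        · -- subdiagonal entry
          rw [if_neg hj1, if_neg hj1,
            if_pos (show s+1+1 = (j:ℕ) ∨ (j:ℕ)+1 = s+1 from Or.inr hj3), if_neg hj2,
            if_pos (show s = (j:ℕ) by omega)]
          field_simp
          ring
        · -- zero entries
          rw [if_neg hj1, if_neg hj1,
            if_neg (show ¬ (s+1+1 = (j:ℕ) ∨ (j:ℕ)+1 = s+1) by omega), if_neg hj2,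
            if_neg (show ¬ s = (j:ℕ) by omega), if_neg (show ¬ s + 1 = (j:ℕ) by omega)]
          ring

lemma MqBq_apply (n : ℕ) (k j : Fin n) :
    (Mq n * (Bq n)ᵀ) k j = (bb (j:ℕ) (k:ℕ) : ℚ) + (bb ((j:ℕ)+1) (k:ℕ) : ℚ) := by
  rw [Matrix.mul_apply]
  simp only [Matrix.transpose_apply]
  have hsplit : ∀ l : Fin n, Mq n k l * Bq n j l =
      (if l = k then (if (k:ℕ) = 0 then 2 else 3) * (bb (j:ℕ) (l:ℕ) : ℚ) else 0)
      + (if (k:ℕ)+1 = (l:ℕ) then (bb (j:ℕ) (l:ℕ) : ℚ) else 0)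
      + (if (l:ℕ)+1 = (k:ℕ) then (bb (j:ℕ) (l:ℕ) : ℚ) else 0) := by
    intro l
    by_cases h1 : (k:ℕ) = (l:ℕ)
    · have hlk : l = k := Fin.ext h1.symm
      have h2 : ¬ ((k:ℕ)+1 = (l:ℕ)) := by omega
      have h3 : ¬ ((l:ℕ)+1 = (k:ℕ)) := by omega
      simp only [Mq, Bq, Matrix.of_apply, if_pos h1, if_pos hlk, if_neg h2, if_neg h3]
      ring
    · have hlk : ¬ (l = k) := fun h => h1 (by rw [h])
      by_cases h2 : (k:ℕ)+1 = (l:ℕ)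
      · have h3 : ¬ ((l:ℕ)+1 = (k:ℕ)) := by omega
        simp only [Mq, Bq, Matrix.of_apply, if_neg h1, if_neg hlk, if_neg h3,
          if_pos (Or.inl h2 : (k:ℕ)+1 = (l:ℕ) ∨ (l:ℕ)+1 = (k:ℕ)), if_pos h2]
        ring
      · by_cases h3 : (l:ℕ)+1 = (k:ℕ)
        · simp only [Mq, Bq, Matrix.of_apply, if_neg h1, if_neg hlk, if_neg h2,
            if_pos (Or.inr h3 : (k:ℕ)+1 = (l:ℕ) ∨ (l:ℕ)+1 = (k:ℕ)), if_pos h3]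
          ring
        · have hor : ¬ ((k:ℕ)+1 = (l:ℕ) ∨ (l:ℕ)+1 = (k:ℕ)) := by omega
          simp only [Mq, Bq, Matrix.of_apply, if_neg h1, if_neg hlk, if_neg h2, if_neg h3,
            if_neg hor]
          ring
  rw [Finset.sum_congr rfl (fun l _ => hsplit l)]
  rw [Finset.sum_add_distrib, Finset.sum_add_distrib,
    Finset.sum_ite_eq' Finset.univ k (fun l => (if (k:ℕ) = 0 then 2 else 3) * (bb (j:ℕ) (l:ℕ) : ℚ))]
  simp only [Finset.mem_univ, if_true]
  have hsum2 : (∑ l : Fin n, if (k:ℕ)+1 = (l:ℕ) then (bb (j:ℕ) (l:ℕ) : ℚ) else 0)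
      = (bb (j:ℕ) ((k:ℕ)+1) : ℚ) := by
    by_cases hk : (k:ℕ)+1 < n
    · rw [Finset.sum_eq_single_of_mem (⟨(k:ℕ)+1, hk⟩ : Fin n) (Finset.mem_univ _)
        (by
          intro m _ hm
          apply if_neg
          intro hc
          exact hm (Fin.ext (by simpa using hc.symm)))]
      rw [if_pos (by simp)]
    · have hkn : (k:ℕ)+1 = n := by have := k.isLt; omega
      rw [Finset.sum_eq_zero (fun l _ => if_neg (by have := l.isLt; omega))]
      rw [bb_eq_zero (show (j:ℕ) < (k:ℕ)+1 by have := j.isLt; omega)]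
      simp
  have hsum3 : (∑ l : Fin n, if (l:ℕ)+1 = (k:ℕ) then (bb (j:ℕ) (l:ℕ) : ℚ) else 0)
      = (if (k:ℕ) = 0 then 0 else (bb (j:ℕ) ((k:ℕ)-1) : ℚ)) := by
    by_cases hk0 : (k:ℕ) = 0
    · rw [if_pos hk0]
      exact Finset.sum_eq_zero (fun l _ => if_neg (by omega))
    · rw [if_neg hk0]
      have htlt : (k:ℕ)-1 < n := by have := k.isLt; omega
      rw [Finset.sum_eq_single_of_mem (⟨(k:ℕ)-1, htlt⟩ : Fin n) (Finset.mem_univ _)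
        (by
          intro m _ hm
          apply if_neg
          intro hc
          exact hm (Fin.ext (by simp; omega)))]
      rw [if_pos (by simp; omega)]
  rw [hsum2, hsum3]
  by_cases hk0 : (k:ℕ) = 0
  · rw [if_pos hk0, if_pos hk0, hk0]
    have hrec := bb_rec0 (j:ℕ)
    push_cast [hrec]
    ring
  · rw [if_neg hk0, if_neg hk0]
    obtain ⟨t, ht⟩ : ∃ t, (k:ℕ) = t+1 := ⟨(k:ℕ)-1, by omega⟩
    rw [ht]
    have e1 : t + 1 + 1 = t + 2 := by omega
    have e2 : t + 1 - 1 = t := by omega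
    rw [e1, e2]
    have hrec := bb_recS (j:ℕ) t
    push_cast [hrec]
    ring

lemma A_eq (n : ℕ) :
    (Matrix.of fun i j : Fin n =>
        ((catalan ((i:ℕ) + (j:ℕ)) : ℤ) : ℚ) + ((catalan ((i:ℕ) + (j:ℕ) + 1) : ℤ) : ℚ))
      = Bq n * (Mq n * (Bq n)ᵀ) := by
  ext i j
  rw [Matrix.mul_apply]
  rw [Finset.sum_congr rfl (fun k _ => by rw [MqBq_apply n k j])]
  simp only [Bq, Matrix.of_apply, mul_add]
  rw [Finset.sum_add_distrib]
  have h1 : (∑ k : Fin n, (bb (i:ℕ) (k:ℕ) : ℚ) * (bb (j:ℕ) (k:ℕ) : ℚ))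
      = ((catalan ((i:ℕ) + (j:ℕ)) : ℤ) : ℚ) := by
    rw [Fin.sum_univ_eq_sum_range (fun k => (bb (i:ℕ) k : ℚ) * (bb (j:ℕ) k : ℚ)) n]
    rw [show (∑ k ∈ range n, (bb (i:ℕ) k : ℚ) * (bb (j:ℕ) k : ℚ))
        = ((∑ k ∈ range n, bb (i:ℕ) k * bb (j:ℕ) k : ℤ) : ℚ) by push_cast; rfl]
    rw [bb_orth n (i:ℕ) (j:ℕ) i.isLt]
  have h2 : (∑ k : Fin n, (bb (i:ℕ) (k:ℕ) : ℚ) * (bb ((j:ℕ)+1) (k:ℕ) : ℚ))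
      = ((catalan ((i:ℕ) + (j:ℕ) + 1) : ℤ) : ℚ) := by
    rw [Fin.sum_univ_eq_sum_range (fun k => (bb (i:ℕ) k : ℚ) * (bb ((j:ℕ)+1) k : ℚ)) n]
    rw [show (∑ k ∈ range n, (bb (i:ℕ) k : ℚ) * (bb ((j:ℕ)+1) k : ℚ))
        = ((∑ k ∈ range n, bb (i:ℕ) k * bb ((j:ℕ)+1) k : ℤ) : ℚ) by push_cast; rfl]
    rw [bb_orth n (i:ℕ) ((j:ℕ)+1) i.isLt, ← Nat.add_assoc]
  rw [h1, h2]

/-- Eq. (1.1): `det(C_{i+j} + C_{i+j+1})_{i,j=0}^{n-1} = F_{2n+1}` for `n ≥ 1`. -/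
theorem hankel_catalan_sum_eq_fib (n : ℕ) (hn : 0 < n) :
    Matrix.det (Matrix.of fun i j : Fin n =>
        (catalan ((i : ℕ) + (j : ℕ)) : ℤ) + (catalan ((i : ℕ) + (j : ℕ) + 1) : ℤ))
      = (Nat.fib (2 * n + 1) : ℤ) := by
  set A : Matrix (Fin n) (Fin n) ℤ := Matrix.of fun i j : Fin n =>
      (catalan ((i : ℕ) + (j : ℕ)) : ℤ) + (catalan ((i : ℕ) + (j : ℕ) + 1) : ℤ) with hA
  have hmap : (Int.castRingHom ℚ).mapMatrix A = Bq n * (Mq n * (Bq n)ᵀ) := by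
    rw [← A_eq n]
    ext i j
    simp [hA]
  have hdet : ((A.det : ℤ) : ℚ) = (Nat.fib (2*n+1) : ℚ) := by
    rw [show ((A.det : ℤ) : ℚ) = (Int.castRingHom ℚ) A.det from rfl]
    rw [RingHom.map_det, hmap, Matrix.det_mul, Matrix.det_mul, Matrix.det_transpose,
      det_Bq, Mq_eq_LU, Matrix.det_mul, det_Lq, det_Uq]
    ring
  exact_mod_cast hdet
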